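/- (Bailey's transformation for balanced ₄F₃ series.) For a nonnegative integer N and parameters a,b,c,e,f: ₄F₃[a, b, c, −N; e, f, 1+a+b+c−e−f−N; 1] = [(e−a)_N (f−a)_N / ((e)_N (f)_N)] · ₄F₃[−N, a, 1+a+c−e−f−N, 1+a+b−e−f−N; 1+a+b+c−e−f−N, 1+a−e−N, 1+a−f−N; 1]. -/

import Mathlib

open Finset

noncomputable section

/-- rising factorial -/
def rf {R : Type*} [CommRing R] (a : R) (k : ℕ) : R := ∏ i ∈ Finset.range k, (a + i)

lemma rf_zero (a : ℝ) : rf a 0 = 1 := by simp [rf]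

lemma rf_succ (a : ℝ) (n : ℕ) : rf a (n+1) = rf a n * (a + n) := Finset.prod_range_succ _ _

lemma rf_succ' (a : ℝ) (n : ℕ) : rf a (n+1) = a * rf (a+1) n := by
  rw [rf, Finset.prod_range_succ']
  simp only [Nat.cast_zero, add_zero]
  rw [mul_comm]
  congr 1
  apply Finset.prod_congr rfl
  intro i _
  push_cast
  ring

lemma rf_add (a : ℝ) (m n : ℕ) : rf a (m+n) = rf a m * rf (a + m) n := by
  rw [rf, Finset.prod_range_add]
  congr 1
  apply Finset.prod_congr rfl
  intro i _
  push_cast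
  ring

lemma rf_rev (v : ℝ) (n : ℕ) : rf (1 - v - n) n = (-1)^n * rf v n := by
  induction n with
  | zero => simp [rf]
  | succ n ih =>
    rw [rf_succ', rf_succ]
    have h1 : (1 : ℝ) - v - (n+1 : ℕ) + 1 = 1 - v - n := by push_cast; ring
    rw [h1, ih]
    push_cast
    ring

lemma rf_neg_nat (N : ℕ) : ∀ k, k ≤ N → rf (-(N:ℝ)) k = (-1)^k * (Nat.factorial k) * (N.choose k) := by
  intro k
  induction k with
  | zero => intro _; simp [rf]
  | succ k ih =>
    intro h
    rw [rf_succ, ih (by omega)]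
    have h2 : (-(N:ℝ) + k) = -((N - k : ℕ) : ℝ) := by
      rw [Nat.cast_sub (by omega)]; ring
    rw [h2]
    have h3 : (N.choose (k+1) * (k+1) : ℕ) = (N.choose k * (N - k) : ℕ) := Nat.choose_succ_right_eq N k
    have h4 : ((N.choose (k+1) : ℝ)) * (k+1) = (N.choose k : ℝ) * ((N - k : ℕ) : ℝ) := by
      exact_mod_cast congrArg (Nat.cast : ℕ → ℝ) h3
    rw [Nat.factorial_succ]
    push_cast
    linear_combination ((-1:ℝ))^k * (Nat.factorial k : ℝ) * h4

lemma choose_split (n : ℕ) (g : ℕ → ℝ) :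
    ∑ j ∈ range (n+2), ((n+1).choose j : ℝ) * g j
    = ∑ j ∈ range (n+1), (n.choose j : ℝ) * g j
      + ∑ j ∈ range (n+1), (n.choose j : ℝ) * g (j+1) := by
  rw [Finset.sum_range_succ' (fun j => ((n+1).choose j : ℝ) * g j) (n+1)]
  have h1 : ∀ j ∈ range (n+1), ((n+1).choose (j+1) : ℝ) * g (j+1)
      = (n.choose j : ℝ) * g (j+1) + (n.choose (j+1) : ℝ) * g (j+1) := by
    intro j _
    rw [Nat.choose_succ_succ]
    push_cast
    ring
  rw [Finset.sum_congr rfl h1, Finset.sum_add_distrib]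
  have h2 : ∑ j ∈ range (n+1), (n.choose j : ℝ) * g j
      = ∑ j ∈ range n, (n.choose (j+1) : ℝ) * g (j+1) + (n.choose 0 : ℝ) * g 0 := by
    rw [← Finset.sum_range_succ' (fun j => (n.choose j : ℝ) * g j) n]
  have h3 : ∑ j ∈ range (n+1), (n.choose (j+1) : ℝ) * g (j+1)
      = ∑ j ∈ range n, (n.choose (j+1) : ℝ) * g (j+1) := by
    rw [Finset.sum_range_succ]
    simp [Nat.choose_succ_self]
  rw [h3, h2]
  simp
  ring

lemma rf_vdm (x y : ℝ) : ∀ n : ℕ, rf (x+y) n = ∑ i ∈ range (n+1), (n.choose i : ℝ) * rf x i * rf y (n-i) := by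
  intro n
  induction n with
  | zero => simp [rf]
  | succ n ih =>
    have key : ∑ i ∈ range (n+2), ((n+1).choose i : ℝ) * rf x i * rf y (n+1-i)
        = ∑ i ∈ range (n+2), ((n+1).choose i : ℝ) * (rf x i * rf y (n+1-i)) := by
      apply Finset.sum_congr rfl; intro i _; ring
    rw [key, choose_split n (fun i => rf x i * rf y (n+1-i))]
    have e1 : ∑ i ∈ range (n+1), (n.choose i : ℝ) * (rf x i * rf y (n+1-i))
        = ∑ i ∈ range (n+1), ((n.choose i : ℝ) * rf x i * rf y (n-i)) * (y + (n-i : ℕ)) := by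
      apply Finset.sum_congr rfl; intro i hi
      rw [mem_range] at hi
      have : n+1-i = (n-i)+1 := by omega
      rw [this, rf_succ]
      ring
    have e2 : ∑ i ∈ range (n+1), (n.choose i : ℝ) * (rf x (i+1) * rf y (n+1-(i+1)))
        = ∑ i ∈ range (n+1), ((n.choose i : ℝ) * rf x i * rf y (n-i)) * (x + i) := by
      apply Finset.sum_congr rfl; intro i hi
      have : n+1-(i+1) = n-i := by omega
      rw [this, rf_succ]
      ring
    rw [e1, e2, rf_succ, ih]
    rw [Finset.sum_mul, ← Finset.sum_add_distrib]
    apply Finset.sum_congr rfl; intro i hi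
    rw [mem_range] at hi
    rw [Nat.cast_sub (by omega)]
    ring

lemma rf_chu (x z : ℝ) : ∀ m : ℕ,
    ∑ j ∈ range (m+1), (-1:ℝ)^j * (m.choose j : ℝ) * rf x j * rf (z+j) (m-j) = rf (z-x) m := by
  intro m
  induction m generalizing x z with
  | zero => simp [rf]
  | succ m ih =>
    have key : ∑ j ∈ range (m+2), (-1:ℝ)^j * ((m+1).choose j : ℝ) * rf x j * rf (z+j) (m+1-j)
        = ∑ j ∈ range (m+2), ((m+1).choose j : ℝ) * ((-1:ℝ)^j * rf x j * rf (z+j) (m+1-j)) := by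
      apply Finset.sum_congr rfl; intro j _; ring
    rw [key, choose_split m (fun j => (-1:ℝ)^j * rf x j * rf (z+j) (m+1-j))]
    have e1 : ∑ j ∈ range (m+1), (m.choose j : ℝ) * ((-1:ℝ)^j * rf x j * rf (z+j) (m+1-j))
        = ∑ j ∈ range (m+1), ((-1:ℝ)^j * (m.choose j : ℝ) * rf x j * rf (z+j) (m-j)) * (z + m) := by
      apply Finset.sum_congr rfl; intro j hj
      rw [mem_range] at hj
      have h : m+1-j = (m-j)+1 := by omega
      rw [h, rf_succ]
      have : z + (j:ℝ) + ((m-j : ℕ):ℝ) = z + m := by rw [Nat.cast_sub (by omega)]; ring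
      rw [this]
      ring
    have e2 : ∑ j ∈ range (m+1), (m.choose j : ℝ) * ((-1:ℝ)^(j+1) * rf x (j+1) * rf (z+(j+1:ℕ)) (m+1-(j+1)))
        = ∑ j ∈ range (m+1), ((-1:ℝ)^j * (m.choose j : ℝ) * rf (x+1) j * rf ((z+1)+j) (m-j)) * (-x) := by
      apply Finset.sum_congr rfl; intro j hj
      have h : m+1-(j+1) = m-j := by omega
      rw [h, rf_succ']
      have : z + ((j+1:ℕ):ℝ) = (z+1) + j := by push_cast; ring
      rw [this, pow_succ]
      ring
    rw [e1, e2, ← Finset.sum_mul, ← Finset.sum_mul, ih, ih]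
    have : z + 1 - (x + 1) = z - x := by ring
    rw [this, rf_succ]
    ring

lemma sum_tri_comm (n : ℕ) (g : ℕ → ℕ → ℝ) :
    ∑ j ∈ range (n+1), ∑ i ∈ range (n+1-j), g j i
    = ∑ i ∈ range (n+1), ∑ j ∈ range (n+1-i), g j i := by
  have key : ∀ h : ℕ → ℕ → ℝ, ∑ j ∈ range (n+1), ∑ i ∈ range (n+1-j), h j i
      = ∑ j ∈ range (n+1), ∑ i ∈ range (n+1), if j + i ≤ n then h j i else 0 := by
    intro h
    apply Finset.sum_congr rfl
    intro j _
    rw [← Finset.sum_filter]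
    apply Finset.sum_congr _ (fun _ _ => rfl)
    ext i
    simp only [mem_range, mem_filter]
    omega
  rw [key, key, Finset.sum_comm]
  apply Finset.sum_congr rfl; intro i _
  apply Finset.sum_congr rfl; intro j _
  have : j + i ≤ n ↔ i + j ≤ n := by omega
  simp [this]

lemma sum_tri_reindex (N : ℕ) (f : ℕ → ℕ → ℝ) :
    ∑ k ∈ range (N+1), ∑ j ∈ range (k+1), f k j
    = ∑ j ∈ range (N+1), ∑ m ∈ range (N+1-j), f (j+m) j := by
  rw [← Finset.sum_range_reflect (fun k => ∑ j ∈ range (k+1), f k j) (N+1)]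
  have e1 : ∀ k ∈ range (N+1), ∑ j ∈ range (N+1-1-k+1), f (N+1-1-k) j
      = ∑ j ∈ range (N+1-k), f (N-k) j := by
    intro k hk
    rw [mem_range] at hk
    have h1 : N+1-1-k = N-k := by omega
    rw [h1]
    have h2 : N-k+1 = N+1-k := by omega
    rw [h2]
  rw [Finset.sum_congr rfl e1, sum_tri_comm N (fun k j => f (N-k) j)]
  apply Finset.sum_congr rfl
  intro j hj
  rw [mem_range] at hj
  rw [← Finset.sum_range_reflect (fun m => f (j+m) j) (N+1-j)]
  apply Finset.sum_congr rfl
  intro k hk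
  rw [mem_range] at hk
  congr 1
  omega

lemma choose_helper {n i j : ℕ} (h : i + j ≤ n) :
    (n.choose j) * ((n-j).choose i) = (n.choose i) * ((n-i).choose j) := by
  have h1 := Nat.choose_mul (n := n) (show j ≤ i+j by omega)
  have h2 := Nat.choose_mul (n := n) (show i ≤ i+j by omega)
  have h3 : (i+j).choose j = (i+j).choose i := by
    have h4 := Nat.choose_symm (show j ≤ i+j by omega)
    rw [show i+j-j = i from by omega] at h4
    exact h4.symm
  rw [show i+j-j = i from by omega] at h1
  rw [show i+j-i = j from by omega] at h2
  rw [← h1, h3, h2]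

lemma rf_saal (x y z : ℝ) (n : ℕ) :
    ∑ j ∈ range (n+1), (-1:ℝ)^j * (n.choose j : ℝ) * rf x j * rf y j * rf (z+j) (n-j)
        * rf (1+x+y-z-n+j) (n-j)
    = (-1:ℝ)^n * rf (z-x) n * rf (z-y) n := by
  have step1 : ∀ j ∈ range (n+1),
      (-1:ℝ)^j * (n.choose j : ℝ) * rf x j * rf y j * rf (z+j) (n-j) * rf (1+x+y-z-n+j) (n-j)
      = ∑ i ∈ range (n+1-j), (-1:ℝ)^j * (n.choose j : ℝ) * ((n-j).choose i : ℝ) * rf x j * rf y j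
          * rf (z-y) i * rf (y+j) (n-j-i) * rf (1+x+y-z-n+j) (n-j) := by
    intro j hj
    rw [mem_range] at hj
    have hz : z + (j:ℝ) = (z-y) + (y+j) := by ring
    rw [hz, rf_vdm (z-y) (y+(j:ℝ)) (n-j), show n-j+1 = n+1-j from by omega,
      Finset.mul_sum, Finset.sum_mul]
    apply Finset.sum_congr rfl; intro i _
    ring
  rw [Finset.sum_congr rfl step1,
    sum_tri_comm n (fun j i => (-1:ℝ)^j * (n.choose j : ℝ) * ((n-j).choose i : ℝ) * rf x j * rf y j
          * rf (z-y) i * rf (y+j) (n-j-i) * rf (1+x+y-z-n+j) (n-j))]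
  have step2 : ∀ i ∈ range (n+1),
      ∑ j ∈ range (n+1-i), (-1:ℝ)^j * (n.choose j : ℝ) * ((n-j).choose i : ℝ) * rf x j * rf y j
          * rf (z-y) i * rf (y+j) (n-j-i) * rf (1+x+y-z-n+j) (n-j)
      = ((-1:ℝ)^n * rf (z-y) n) * ((n.choose i : ℝ) * rf (z-x-y) i * rf y (n-i)) := by
    intro i hi
    rw [mem_range] at hi
    have e0 : ∀ j ∈ range (n+1-i),
        (-1:ℝ)^j * (n.choose j : ℝ) * ((n-j).choose i : ℝ) * rf x j * rf y j
          * rf (z-y) i * rf (y+j) (n-j-i) * rf (1+x+y-z-n+j) (n-j)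
        = ((n.choose i : ℝ) * rf (z-y) i * rf y (n-i) * rf (1+x+y-z-n + ((n-i:ℕ):ℝ)) i)
          * ((-1:ℝ)^j * ((n-i).choose j : ℝ) * rf x j * rf (1+x+y-z-n+j) (n-i-j)) := by
      intro j hj
      rw [mem_range] at hj
      have hc' : (n.choose j : ℝ) * ((n-j).choose i : ℝ)
          = (n.choose i : ℝ) * ((n-i).choose j : ℝ) := by
        exact_mod_cast congrArg (Nat.cast : ℕ → ℝ) (choose_helper (show i+j ≤ n by omega))
      have hy : rf y j * rf (y + (j:ℝ)) (n-j-i) = rf y (n-i) := by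
        rw [← rf_add]; congr 1; omega
      have harg : (1+x+y-z-(n:ℝ)+(j:ℝ)) + ((n-i-j:ℕ):ℝ) = 1+x+y-z-(n:ℝ) + ((n-i:ℕ):ℝ) := by
        rw [Nat.cast_sub (show j ≤ n-i from by omega), Nat.cast_sub (show i ≤ n from by omega)]
        ring
      have hw : rf (1+x+y-z-(n:ℝ)+(j:ℝ)) (n-i-j) * rf (1+x+y-z-(n:ℝ) + ((n-i:ℕ):ℝ)) i
          = rf (1+x+y-z-(n:ℝ)+(j:ℝ)) (n-j) := by
        rw [← harg, ← rf_add]; congr 1; omega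
      rw [← hy, ← hw]
      linear_combination (rf x j * rf y j * rf (y + (j:ℝ)) (n-j-i) * rf (z-y) i
        * rf (1+x+y-z-(n:ℝ)+(j:ℝ)) (n-i-j) * rf (1+x+y-z-(n:ℝ) + ((n-i:ℕ):ℝ)) i * (-1:ℝ)^j) * hc'
    rw [Finset.sum_congr rfl e0, ← Finset.mul_sum, show n+1-i = (n-i)+1 from by omega,
      rf_chu x (1+x+y-z-(n:ℝ)) (n-i)]
    have r1 : rf (1+x+y-z-(n:ℝ) + ((n-i:ℕ):ℝ)) i = (-1:ℝ)^i * rf (z-x-y) i := by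
      have harg : 1+x+y-z-(n:ℝ) + ((n-i:ℕ):ℝ) = 1 - (z-x-y) - (i:ℝ) := by
        rw [Nat.cast_sub (show i ≤ n from by omega)]; ring
      rw [harg, rf_rev]
    have r2 : rf (1+x+y-z-(n:ℝ) - x) (n-i) = (-1:ℝ)^(n-i) * rf ((z-y)+(i:ℝ)) (n-i) := by
      have harg : 1+x+y-z-(n:ℝ) - x = 1 - ((z-y)+(i:ℝ)) - ((n-i:ℕ):ℝ) := by
        rw [Nat.cast_sub (show i ≤ n from by omega)]; ring
      rw [harg, rf_rev]
    have r3 : rf (z-y) i * rf ((z-y)+(i:ℝ)) (n-i) = rf (z-y) n := by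
      rw [← rf_add]; congr 1; omega
    have r4 : (-1:ℝ)^i * (-1:ℝ)^(n-i) = (-1:ℝ)^n := by
      rw [← pow_add]; congr 1; omega
    rw [r1, r2, ← r3, ← r4]
    ring
  rw [Finset.sum_congr rfl step2, ← Finset.mul_sum, ← rf_vdm (z-x-y) y n,
    show z-x-y+y = z-x from by ring]
  ring

lemma negsq (t : ℕ) : (-1:ℝ)^t * (-1:ℝ)^t = 1 := by
  rw [← pow_add]
  exact Even.neg_one_pow ⟨t, rfl⟩

lemma bailey_cleared (N : ℕ) (a b c e f : ℝ) :
    ∑ k ∈ range (N+1), (-1:ℝ)^k * (N.choose k : ℝ) * rf a k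
        * rf (1+a+c-e-f-N) k * rf (1+a+b-e-f-N) k
        * rf (1+a+b+c-e-f-N+k) (N-k) * rf (e-a) (N-k) * rf (f-a) (N-k)
    = ∑ k ∈ range (N+1), (-1:ℝ)^k * (N.choose k : ℝ) * rf a k * rf b k * rf c k
        * rf (e+k) (N-k) * rf (f+k) (N-k) * rf (1+a+b+c-e-f-N+k) (N-k) := by
  have step1 : ∀ k ∈ range (N+1),
      (-1:ℝ)^k * (N.choose k : ℝ) * rf a k
        * rf (1+a+c-e-f-(N:ℝ)) k * rf (1+a+b-e-f-(N:ℝ)) k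
        * rf (1+a+b+c-e-f-(N:ℝ)+k) (N-k) * rf (e-a) (N-k) * rf (f-a) (N-k)
      = ∑ j ∈ range (k+1),
          (-1:ℝ)^j * (N.choose k : ℝ) * (k.choose j : ℝ) * rf a k * rf b j * rf c j
            * rf (1+a+b+c-e-f-(N:ℝ)+j) (k-j)
            * rf (1+b+c-(1+a+b+c-e-f-(N:ℝ))-k+j) (k-j)
            * rf (1+a+b+c-e-f-(N:ℝ)+k) (N-k) * rf (e-a) (N-k) * rf (f-a) (N-k) := by
    intro k _
    have huv : rf (1+a+c-e-f-(N:ℝ)) k * rf (1+a+b-e-f-(N:ℝ)) k * (-1:ℝ)^k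
        = ∑ j ∈ range (k+1), (-1:ℝ)^j * (k.choose j : ℝ) * rf b j * rf c j
            * rf ((1+a+b+c-e-f-(N:ℝ))+j) (k-j)
            * rf (1+b+c-(1+a+b+c-e-f-(N:ℝ))-k+j) (k-j) := by
      rw [rf_saal b c (1+a+b+c-e-f-(N:ℝ)) k,
        show 1+a+b+c-e-f-(N:ℝ) - b = 1+a+c-e-f-(N:ℝ) from by ring,
        show 1+a+b+c-e-f-(N:ℝ) - c = 1+a+b-e-f-(N:ℝ) from by ring]
      ring
    have hsplit : (-1:ℝ)^k * (N.choose k : ℝ) * rf a k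
        * rf (1+a+c-e-f-(N:ℝ)) k * rf (1+a+b-e-f-(N:ℝ)) k
        * rf (1+a+b+c-e-f-(N:ℝ)+k) (N-k) * rf (e-a) (N-k) * rf (f-a) (N-k)
        = (rf (1+a+c-e-f-(N:ℝ)) k * rf (1+a+b-e-f-(N:ℝ)) k * (-1:ℝ)^k)
          * ((N.choose k : ℝ) * rf a k * rf (1+a+b+c-e-f-(N:ℝ)+k) (N-k)
            * rf (e-a) (N-k) * rf (f-a) (N-k)) := by ring
    rw [hsplit, huv, Finset.sum_mul]
    apply Finset.sum_congr rfl
    intro j _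
    ring
  rw [Finset.sum_congr rfl step1]
  rw [sum_tri_reindex N (fun k j =>
      (-1:ℝ)^j * (N.choose k : ℝ) * (k.choose j : ℝ) * rf a k * rf b j * rf c j
        * rf (1+a+b+c-e-f-(N:ℝ)+j) (k-j)
        * rf (1+b+c-(1+a+b+c-e-f-(N:ℝ))-k+j) (k-j)
        * rf (1+a+b+c-e-f-(N:ℝ)+k) (N-k) * rf (e-a) (N-k) * rf (f-a) (N-k))]
  apply Finset.sum_congr rfl
  intro j hj
  rw [mem_range] at hj
  have hjN : j ≤ N := by omega
  have e0 : ∀ m ∈ range (N+1-j),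
      (-1:ℝ)^j * (N.choose (j+m) : ℝ) * ((j+m).choose j : ℝ) * rf a (j+m) * rf b j * rf c j
        * rf (1+a+b+c-e-f-(N:ℝ)+(j:ℝ)) ((j+m)-j)
        * rf (1+b+c-(1+a+b+c-e-f-(N:ℝ))-(j+m:ℕ)+j) ((j+m)-j)
        * rf (1+a+b+c-e-f-(N:ℝ)+(j+m:ℕ)) (N-(j+m)) * rf (e-a) (N-(j+m)) * rf (f-a) (N-(j+m))
      = ((-1:ℝ)^j * (N.choose j : ℝ) * rf a j * rf b j * rf c j
          * rf (1+a+b+c-e-f-(N:ℝ)+j) (N-j))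
        * ((-1:ℝ)^m * ((N-j).choose m : ℝ) * rf (a+(j:ℝ)) m * rf (1+a-e-f-(N:ℝ)) m
          * rf (e-a) (N-j-m) * rf (f-a) (N-j-m)) := by
    intro m hm
    rw [mem_range] at hm
    have hcc : (N.choose (j+m)) * ((j+m).choose j) = (N.choose j) * ((N-j).choose m) := by
      have h := Nat.choose_mul (n := N) (show j ≤ j+m from by omega)
      rwa [show j+m-j = m from by omega] at h
    have hcc' : (N.choose (j+m) : ℝ) * ((j+m).choose j : ℝ)
        = (N.choose j : ℝ) * ((N-j).choose m : ℝ) := by exact_mod_cast congrArg (Nat.cast : ℕ → ℝ) hcc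
    have ha : rf a j * rf (a + (j:ℝ)) m = rf a (j+m) := (rf_add a j m).symm
    have hw2 : rf (1+a+b+c-e-f-(N:ℝ)+(j:ℝ)) m
          * rf ((1+a+b+c-e-f-(N:ℝ)+(j:ℝ)) + (m:ℝ)) (N-j-m)
        = rf (1+a+b+c-e-f-(N:ℝ)+(j:ℝ)) (N-j) := by
      rw [← rf_add]; congr 1; omega
    have ht : rf (1+b+c-(1+a+b+c-e-f-(N:ℝ))-((j+m:ℕ):ℝ)+(j:ℝ)) m
        = (-1:ℝ)^m * rf (1+a-e-f-(N:ℝ)) m := by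
      rw [show 1+b+c-(1+a+b+c-e-f-(N:ℝ))-((j+m:ℕ):ℝ)+(j:ℝ) = 1 - (1+a-e-f-(N:ℝ)) - (m:ℝ) from by
        push_cast; ring]
      exact rf_rev _ m
    rw [show (j+m)-j = m from by omega, show N-(j+m) = N-j-m from by omega,
      show 1+a+b+c-e-f-(N:ℝ)+((j+m:ℕ):ℝ) = (1+a+b+c-e-f-(N:ℝ)+(j:ℝ)) + (m:ℝ) from by push_cast; ring,
      ht, ← ha, ← hw2]
    linear_combination ((-1:ℝ)^j * (-1:ℝ)^m * rf a j * rf (a+(j:ℝ)) m * rf b j * rf c j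
      * rf (1+a+b+c-e-f-(N:ℝ)+(j:ℝ)) m * rf ((1+a+b+c-e-f-(N:ℝ)+(j:ℝ)) + (m:ℝ)) (N-j-m)
      * rf (1+a-e-f-(N:ℝ)) m * rf (e-a) (N-j-m) * rf (f-a) (N-j-m)) * hcc'
  rw [Finset.sum_congr rfl e0, ← Finset.mul_sum]
  have e1 : ∀ m ∈ range (N+1-j),
      (-1:ℝ)^m * ((N-j).choose m : ℝ) * rf (a+(j:ℝ)) m * rf (1+a-e-f-(N:ℝ)) m
        * rf (e-a) (N-j-m) * rf (f-a) (N-j-m)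
      = (-1:ℝ)^m * ((N-j).choose m : ℝ) * rf (a+(j:ℝ)) m * rf (1+a-e-f-(N:ℝ)) m
        * rf ((1+a-e-((N-j:ℕ):ℝ))+(m:ℕ)) (N-j-m)
        * rf (1+(a+(j:ℝ))+(1+a-e-f-(N:ℝ))-(1+a-e-((N-j:ℕ):ℝ))-((N-j:ℕ):ℝ)+(m:ℕ)) (N-j-m) := by
    intro m hm
    rw [mem_range] at hm
    have re : rf (e-a) (N-j-m) = (-1:ℝ)^(N-j-m) * rf ((1+a-e-((N-j:ℕ):ℝ))+(m:ℕ)) (N-j-m) := by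
      rw [show e-a = 1 - ((1+a-e-((N-j:ℕ):ℝ))+((m:ℕ):ℝ)) - ((N-j-m:ℕ):ℝ) from by
        push_cast [Nat.cast_sub hjN, Nat.cast_sub (show m ≤ N-j from by omega)]; ring]
      exact rf_rev _ _
    have rfa : rf (f-a) (N-j-m)
        = (-1:ℝ)^(N-j-m) * rf ((1+a-f-((N-j:ℕ):ℝ))+(m:ℕ)) (N-j-m) := by
      rw [show f-a = 1 - ((1+a-f-((N-j:ℕ):ℝ))+((m:ℕ):ℝ)) - ((N-j-m:ℕ):ℝ) from by
        push_cast [Nat.cast_sub hjN, Nat.cast_sub (show m ≤ N-j from by omega)]; ring]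
      exact rf_rev _ _
    rw [re, rfa,
      show 1+(a+(j:ℝ))+(1+a-e-f-(N:ℝ))-(1+a-e-((N-j:ℕ):ℝ))-((N-j:ℕ):ℝ)+((m:ℕ):ℝ)
        = (1+a-f-((N-j:ℕ):ℝ))+((m:ℕ):ℝ) from by
        push_cast [Nat.cast_sub hjN]; ring]
    linear_combination ((-1:ℝ)^m * ((N-j).choose m : ℝ) * rf (a+(j:ℝ)) m
      * rf (1+a-e-f-(N:ℝ)) m * rf ((1+a-e-((N-j:ℕ):ℝ))+((m:ℕ):ℝ)) (N-j-m)
      * rf ((1+a-f-((N-j:ℕ):ℝ))+((m:ℕ):ℝ)) (N-j-m)) * negsq (N-j-m)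
  rw [Finset.sum_congr rfl e1, show N+1-j = (N-j)+1 from by omega,
    rf_saal (a+(j:ℝ)) (1+a-e-f-(N:ℝ)) (1+a-e-((N-j:ℕ):ℝ)) (N-j)]
  rw [show 1+a-e-((N-j:ℕ):ℝ) - (a+(j:ℝ)) = 1 - (e+(j:ℝ)) - ((N-j:ℕ):ℝ) from by
      push_cast [Nat.cast_sub hjN]; ring,
    rf_rev (e+(j:ℝ)) (N-j),
    show 1+a-e-((N-j:ℕ):ℝ) - (1+a-e-f-(N:ℝ)) = f+(j:ℝ) from by
      push_cast [Nat.cast_sub hjN]; ring]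
  linear_combination ((-1:ℝ)^j * (N.choose j : ℝ) * rf a j * rf b j * rf c j
    * rf (1+a+b+c-e-f-(N:ℝ)+(j:ℝ)) (N-j) * rf (e+(j:ℝ)) (N-j) * rf (f+(j:ℝ)) (N-j)) * negsq (N-j)

/-- Bailey's transformation for terminating balanced `₄F₃` series. -/
theorem stmt13 (N : ℕ) (a b c e f : ℝ)
    (hden : ∀ k ≤ N, rf e k ≠ 0 ∧ rf f k ≠ 0
      ∧ rf (1 + a + b + c - e - f - N) k ≠ 0
      ∧ rf (1 + a - e - N) k ≠ 0 ∧ rf (1 + a - f - N) k ≠ 0) :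
    ∑ k ∈ Finset.range (N + 1),
      rf a k * rf b k * rf c k * rf (-(N : ℝ)) k
        / ((Nat.factorial k : ℝ) * rf e k * rf f k * rf (1 + a + b + c - e - f - N) k)
    = (rf (e - a) N * rf (f - a) N / (rf e N * rf f N))
      * ∑ k ∈ Finset.range (N + 1),
          rf (-(N : ℝ)) k * rf a k * rf (1 + a + c - e - f - N) k
              * rf (1 + a + b - e - f - N) k
            / ((Nat.factorial k : ℝ) * rf (1 + a + b + c - e - f - N) k
                * rf (1 + a - e - N) k * rf (1 + a - f - N) k) := by
  obtain ⟨heN, hfN, hwN, -, -⟩ := hden N le_rfl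
  have hD : rf e N * rf f N * rf (1+a+b+c-e-f-(N:ℝ)) N ≠ 0 :=
    mul_ne_zero (mul_ne_zero heN hfN) hwN
  apply mul_right_cancel₀ hD
  have hL : (∑ k ∈ Finset.range (N + 1),
      rf a k * rf b k * rf c k * rf (-(N : ℝ)) k
        / ((Nat.factorial k : ℝ) * rf e k * rf f k * rf (1 + a + b + c - e - f - N) k))
      * (rf e N * rf f N * rf (1+a+b+c-e-f-(N:ℝ)) N)
      = ∑ k ∈ range (N+1), (-1:ℝ)^k * (N.choose k : ℝ) * rf a k * rf b k * rf c k
        * rf (e+k) (N-k) * rf (f+k) (N-k) * rf (1+a+b+c-e-f-(N:ℝ)+k) (N-k) := by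
    rw [Finset.sum_mul]
    apply Finset.sum_congr rfl
    intro k hk
    rw [mem_range] at hk
    have hkN : k ≤ N := by omega
    obtain ⟨he, hf, hw, -, -⟩ := hden k hkN
    have hfac : (k.factorial : ℝ) ≠ 0 := Nat.cast_ne_zero.2 (Nat.factorial_ne_zero k)
    have hse : rf e N = rf e k * rf (e+(k:ℝ)) (N-k) := by
      have h1 := rf_add e k (N-k)
      rwa [show k+(N-k) = N from by omega] at h1
    have hsf : rf f N = rf f k * rf (f+(k:ℝ)) (N-k) := by
      have h1 := rf_add f k (N-k)
      rwa [show k+(N-k) = N from by omega] at h1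
    have hsw : rf (1+a+b+c-e-f-(N:ℝ)) N
        = rf (1+a+b+c-e-f-(N:ℝ)) k * rf (1+a+b+c-e-f-(N:ℝ)+(k:ℝ)) (N-k) := by
      have h1 := rf_add (1+a+b+c-e-f-(N:ℝ)) k (N-k)
      rwa [show k+(N-k) = N from by omega] at h1
    rw [rf_neg_nat N k hkN, hse, hsf, hsw]
    field_simp
  have hR : ((rf (e - a) N * rf (f - a) N / (rf e N * rf f N))
      * ∑ k ∈ Finset.range (N + 1),
          rf (-(N : ℝ)) k * rf a k * rf (1 + a + c - e - f - N) k
              * rf (1 + a + b - e - f - N) k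
            / ((Nat.factorial k : ℝ) * rf (1 + a + b + c - e - f - N) k
                * rf (1 + a - e - N) k * rf (1 + a - f - N) k))
      * (rf e N * rf f N * rf (1+a+b+c-e-f-(N:ℝ)) N)
      = ∑ k ∈ range (N+1), (-1:ℝ)^k * (N.choose k : ℝ) * rf a k
        * rf (1+a+c-e-f-(N:ℝ)) k * rf (1+a+b-e-f-(N:ℝ)) k
        * rf (1+a+b+c-e-f-(N:ℝ)+k) (N-k) * rf (e-a) (N-k) * rf (f-a) (N-k) := by
    rw [Finset.mul_sum, Finset.sum_mul]
    apply Finset.sum_congr rfl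
    intro k hk
    rw [mem_range] at hk
    have hkN : k ≤ N := by omega
    obtain ⟨he, hf, hw, hp, hq⟩ := hden k hkN
    have hfac : (k.factorial : ℝ) ≠ 0 := Nat.cast_ne_zero.2 (Nat.factorial_ne_zero k)
    have hsw : rf (1+a+b+c-e-f-(N:ℝ)) N
        = rf (1+a+b+c-e-f-(N:ℝ)) k * rf (1+a+b+c-e-f-(N:ℝ)+(k:ℝ)) (N-k) := by
      have h1 := rf_add (1+a+b+c-e-f-(N:ℝ)) k (N-k)
      rwa [show k+(N-k) = N from by omega] at h1
    have hsea : rf (e-a) N = rf (e-a) (N-k) * ((-1:ℝ)^k * rf (1+a-e-(N:ℝ)) k) := by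
      have h1 := rf_add (e-a) (N-k) k
      rw [show (N-k)+k = N from by omega] at h1
      rw [h1, show (e-a)+((N-k:ℕ):ℝ) = 1 - (1+a-e-(N:ℝ)) - (k:ℝ) from by
        push_cast [Nat.cast_sub hkN]; ring, rf_rev]
    have hsfa : rf (f-a) N = rf (f-a) (N-k) * ((-1:ℝ)^k * rf (1+a-f-(N:ℝ)) k) := by
      have h1 := rf_add (f-a) (N-k) k
      rw [show (N-k)+k = N from by omega] at h1
      rw [h1, show (f-a)+((N-k:ℕ):ℝ) = 1 - (1+a-f-(N:ℝ)) - (k:ℝ) from by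
        push_cast [Nat.cast_sub hkN]; ring, rf_rev]
    rw [rf_neg_nat N k hkN, hsw, hsea, hsfa]
    rcases Nat.even_or_odd k with hpar | hpar
    · rw [hpar.neg_one_pow]
      field_simp
    · rw [hpar.neg_one_pow]
      field_simp
  rw [hL, hR]
  exact (bailey_cleared N a b c e f).symm
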